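/- arXiv:1904.02124 — 5 statements merged into one kernel-verified Lean document; each statement's English description precedes it below -/
import Mathlib

section
/- The DSM implementation of the Signal object (using a shared bit Bit initialized to absent, a shared pointer GoAddr initialized to NIL, procedure signal() that writes present to Bit, reads GoAddr into a local variable, and if that variable is non-NIL writes true through it; and procedure wait() that allocates a fresh local boolean spin variable initialized to false, stores its address in GoAddr, and then returns immediately if Bit equals present and otherwise busy-waits until the spin variable equals true) is linearizable with respect to signal(): provided no two executions of wait() are concurrent, in every run there is a point inside each execution of signal() at which it appears to atomically set the object's State to present. -/
/-!
The DSM implementation of a Signal object (shared bit `Bit` initialized to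
absent, shared pointer `GoAddr` initialized to NIL; `signal()` writes present
to `Bit`, reads `GoAddr` into a local register, and, if non-NIL, writes `true`
through it; `wait()` allocates a fresh local boolean spin variable initialized
to `false`, publishes its address in `GoAddr`, returns immediately if `Bit` is
present, and otherwise busy-waits until the spin variable is `true`), modeled
as a transition system.

STATEMENT 0: provided no two executions of `wait()` are concurrent, in every
run there is a point inside each execution of `signal()` (a linearization
point, between its invocation and its response) at which it appears to
atomically set the object's State to present: the abstract State determined by
these points is consistent with the specification, i.e. every `wait()` returns
only at a time by which some `signal()` has been linearized.
-/

/-- Program counters for the DSM implementation of the Signal object.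
`sig1`–`sig3` are the lines of `signal()` (`sig3` carries the value read from
`GoAddr`); `wait1`–`wait5` are the lines of `wait()` (carrying the address of
the allocated spin variable); `idle` means the process runs neither. -/
inductive PC (Addr : Type) where
  | idle
  | sig1
  | sig2
  | sig3 (a : Option Addr)
  | wait1
  | wait2 (g : Addr)
  | wait3 (g : Addr)
  | wait4 (g : Addr)
  | wait5 (g : Addr)
  deriving DecidableEq

/-- A configuration: the shared `Bit` (`true` ↔ present), the shared pointer
`GoAddr` (`none` ↔ NIL), the pool of boolean spin variables `mem`, the
allocation flags (for freshness of allocation), and all program counters. -/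
structure Config (Proc Addr : Type) where
  bit : Bool
  goAddr : Option Addr
  mem : Addr → Bool
  alloc : Addr → Bool
  pc : Proc → PC Addr

/-- The process is currently executing `wait()`. -/
def InWait {Addr : Type} : PC Addr → Prop
  | PC.wait1 => True
  | PC.wait2 _ => True
  | PC.wait3 _ => True
  | PC.wait4 _ => True
  | PC.wait5 _ => True
  | _ => False

variable {Proc Addr : Type}

/-- One atomic step of the implementation, taken by process `p`. -/
inductive Step [DecidableEq Proc] [DecidableEq Addr] :
    Config Proc Addr → Proc → Config Proc Addr → Prop where
  | invokeSignal (c : Config Proc Addr) (p : Proc) (h : c.pc p = PC.idle) :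
      Step c p { c with pc := Function.update c.pc p PC.sig1 }
  | invokeWait (c : Config Proc Addr) (p : Proc) (h : c.pc p = PC.idle) :
      Step c p { c with pc := Function.update c.pc p PC.wait1 }
  | sig1 (c : Config Proc Addr) (p : Proc) (h : c.pc p = PC.sig1) :
      Step c p { c with bit := true, pc := Function.update c.pc p PC.sig2 }
  | sig2 (c : Config Proc Addr) (p : Proc) (h : c.pc p = PC.sig2) :
      Step c p { c with pc := Function.update c.pc p (PC.sig3 c.goAddr) }
  | sig3none (c : Config Proc Addr) (p : Proc) (h : c.pc p = PC.sig3 none) :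
      Step c p { c with pc := Function.update c.pc p PC.idle }
  | sig3some (c : Config Proc Addr) (p : Proc) (a : Addr)
      (h : c.pc p = PC.sig3 (some a)) :
      Step c p { c with mem := Function.update c.mem a true,
                        pc := Function.update c.pc p PC.idle }
  | wait1 (c : Config Proc Addr) (p : Proc) (g : Addr) (h : c.pc p = PC.wait1)
      (hg : c.alloc g = false) :
      Step c p { c with alloc := Function.update c.alloc g true,
                        pc := Function.update c.pc p (PC.wait2 g) }
  | wait2 (c : Config Proc Addr) (p : Proc) (g : Addr) (h : c.pc p = PC.wait2 g) :
      Step c p { c with mem := Function.update c.mem g false,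
                        pc := Function.update c.pc p (PC.wait3 g) }
  | wait3 (c : Config Proc Addr) (p : Proc) (g : Addr) (h : c.pc p = PC.wait3 g) :
      Step c p { c with goAddr := some g,
                        pc := Function.update c.pc p (PC.wait4 g) }
  | wait4tt (c : Config Proc Addr) (p : Proc) (g : Addr) (h : c.pc p = PC.wait4 g)
      (hb : c.bit = true) :
      Step c p { c with pc := Function.update c.pc p PC.idle }
  | wait4ff (c : Config Proc Addr) (p : Proc) (g : Addr) (h : c.pc p = PC.wait4 g)
      (hb : c.bit = false) :
      Step c p { c with pc := Function.update c.pc p (PC.wait5 g) }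
  | wait5tt (c : Config Proc Addr) (p : Proc) (g : Addr) (h : c.pc p = PC.wait5 g)
      (hm : c.mem g = true) :
      Step c p { c with pc := Function.update c.pc p PC.idle }
  | wait5ff (c : Config Proc Addr) (p : Proc) (g : Addr) (h : c.pc p = PC.wait5 g)
      (hm : c.mem g = false) :
      Step c p c

/-- Initial configurations: `Bit = absent`, `GoAddr = NIL`, nothing allocated,
every process idle. -/
def Init (c : Config Proc Addr) : Prop :=
  c.bit = false ∧ c.goAddr = none ∧ (∀ a, c.alloc a = false) ∧ ∀ p, c.pc p = PC.idle

/-- A run of the implementation: an infinite interleaving of steps.  `act n`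
is the process (if any) taking the step from `cfg n` to `cfg (n+1)`. -/
structure Run (Proc Addr : Type) [DecidableEq Proc] [DecidableEq Addr] where
  cfg : ℕ → Config Proc Addr
  act : ℕ → Option Proc
  init : Init (cfg 0)
  step : ∀ n, match act n with
    | none => cfg (n + 1) = cfg n
    | some p => Step (cfg n) p (cfg (n + 1))

variable [DecidableEq Proc] [DecidableEq Addr]

/-- No two executions of `wait()` are concurrent. -/
def NoConcurrentWaits (R : Run Proc Addr) : Prop :=
  ∀ n p q, InWait ((R.cfg n).pc p) → InWait ((R.cfg n).pc q) → p = q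

/-- Process `p` invokes `signal()` at step `n`. -/
def SigInvoke (R : Run Proc Addr) (n : ℕ) (p : Proc) : Prop :=
  R.act n = some p ∧ (R.cfg n).pc p = PC.idle ∧ (R.cfg (n + 1)).pc p = PC.sig1

/-- The execution of `signal()` invoked by `p` at step `n` responds at step
`m` (its step at `m` returns the process to idle, and it was continuously
executing this operation in between). -/
def SigResponse (R : Run Proc Addr) (n : ℕ) (p : Proc) (m : ℕ) : Prop :=
  SigInvoke R n p ∧ n < m ∧ (R.cfg (m + 1)).pc p = PC.idle ∧
    ∀ j, n < j → j ≤ m → (R.cfg j).pc p ≠ PC.idle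

/-- Step `t` is the response step of an execution of `wait()` by `p`. -/
def WaitReturn (R : Run Proc Addr) (t : ℕ) (p : Proc) : Prop :=
  R.act t = some p ∧ InWait ((R.cfg t).pc p) ∧ (R.cfg (t + 1)).pc p = PC.idle


/-- Invariant holding as long as no `signal()` has been invoked: the bit is
false, every process is idle or in `wait()`, and every published spin
variable of a waiter past line 2 is false. -/
def SigFreeInv (c : Config Proc Addr) : Prop :=
  c.bit = false ∧ (∀ p, c.pc p = PC.idle ∨ InWait (c.pc p)) ∧
    ∀ p g, (c.pc p = PC.wait3 g ∨ c.pc p = PC.wait4 g ∨ c.pc p = PC.wait5 g) →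
      c.mem g = false

theorem sigFreeInv_preserved (R : Run Proc Addr) (t : ℕ)
    (hinv : SigFreeInv (R.cfg t)) (hno : ∀ q, ¬ SigInvoke R t q) :
    SigFreeInv (R.cfg (t + 1)) := by
  obtain ⟨hbit, hidle, hmem⟩ := hinv
  have hstep := R.step t
  rcases hact : R.act t with _ | p
  · rw [hact] at hstep; simp only at hstep; rw [hstep]; exact ⟨hbit, hidle, hmem⟩
  · rw [hact] at hstep; simp only at hstep
    generalize hc' : R.cfg (t + 1) = c' at hstep ⊢
    cases hstep with
    | invokeSignal h =>
        exact absurd ⟨hact, h, by rw [hc']; simp [Function.update]⟩ (hno p)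
    | invokeWait h =>
        refine ⟨hbit, fun q => ?_, fun q g hq => ?_⟩
        · rcases eq_or_ne q p with rfl | hqp
          · simp [Function.update, InWait]
          · simpa [Function.update, hqp] using hidle q
        · rcases eq_or_ne q p with rfl | hqp
          · simp [Function.update] at hq
          · exact hmem q g (by simpa [Function.update, hqp] using hq)
    | sig1 h =>
        rcases hidle p with h' | h' <;> rw [h] at h' <;> simp [InWait] at h'
    | sig2 h =>
        rcases hidle p with h' | h' <;> rw [h] at h' <;> simp [InWait] at h'
    | sig3none h =>
        rcases hidle p with h' | h' <;> rw [h] at h' <;> simp [InWait] at h'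
    | sig3some a h =>
        rcases hidle p with h' | h' <;> rw [h] at h' <;> simp [InWait] at h'
    | wait1 g h hg =>
        refine ⟨hbit, fun q => ?_, fun q g' hq => ?_⟩
        · rcases eq_or_ne q p with rfl | hqp
          · simp [Function.update, InWait]
          · simpa [Function.update, hqp] using hidle q
        · rcases eq_or_ne q p with rfl | hqp
          · simp [Function.update] at hq
          · exact hmem q g' (by simpa [Function.update, hqp] using hq)
    | wait2 g h =>
        refine ⟨hbit, fun q => ?_, fun q g' hq => ?_⟩
        · rcases eq_or_ne q p with rfl | hqp
          · simp [Function.update, InWait]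
          · simpa [Function.update, hqp] using hidle q
        · rcases eq_or_ne q p with rfl | hqp
          · simp only [Function.update_self] at hq
            rcases hq with hq | hq | hq <;> cases hq <;> simp [Function.update]
          · rcases eq_or_ne g' g with rfl | hg'
            · simp [Function.update]
            · have := hmem q g' (by simpa [Function.update, hqp] using hq)
              simpa [Function.update, hg'] using this
    | wait3 g h =>
        refine ⟨hbit, fun q => ?_, fun q g' hq => ?_⟩
        · rcases eq_or_ne q p with rfl | hqp
          · simp [Function.update, InWait]
          · simpa [Function.update, hqp] using hidle q
        · rcases eq_or_ne q p with rfl | hqp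
          · simp only [Function.update_self] at hq
            rcases hq with hq | hq | hq <;> cases hq
            exact hmem q g (Or.inl h)
          · exact hmem q g' (by simpa [Function.update, hqp] using hq)
    | wait4tt g h hb => rw [hbit] at hb; cases hb
    | wait4ff g h hb =>
        refine ⟨hbit, fun q => ?_, fun q g' hq => ?_⟩
        · rcases eq_or_ne q p with rfl | hqp
          · simp [Function.update, InWait]
          · simpa [Function.update, hqp] using hidle q
        · rcases eq_or_ne q p with rfl | hqp
          · simp only [Function.update_self] at hq
            rcases hq with hq | hq | hq <;> cases hq
            exact hmem q g (Or.inr (Or.inl h))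
          · exact hmem q g' (by simpa [Function.update, hqp] using hq)
    | wait5tt g h hm =>
        have := hmem p g (Or.inr (Or.inr h)); rw [this] at hm; cases hm
    | wait5ff g h hm => exact ⟨hbit, hidle, hmem⟩

/-- Theorem 1(i): `signal()` is linearizable.  Provided no
two executions of `wait()` are concurrent, there is an assignment `L` of
linearization points to the executions of `signal()` (identified by their
invocation steps) such that each point lies inside the corresponding execution
(at or after the invocation and at or before the response), and at this point
the operation appears to atomically set the object's State to present: every
`wait()` returns only at a time by which some `signal()` has been linearized,
as required by the specification of the Signal object. -/
theorem signal_linearizable (R : Run Proc Addr) (hcw : NoConcurrentWaits R) :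
    ∃ L : ℕ → ℕ,
      (∀ n p, SigInvoke R n p →
        n ≤ L n ∧ ∀ m, SigResponse R n p m → L n ≤ m) ∧
      (∀ t p, WaitReturn R t p → ∃ n q, SigInvoke R n q ∧ L n ≤ t) := by
  refine ⟨fun n => n, fun n p h => ⟨le_refl n, fun m hm => le_of_lt hm.2.1⟩, ?_⟩
  intro t p hw
  by_contra hno
  push_neg at hno
  have hfree : ∀ s, s ≤ t → SigFreeInv (R.cfg s) := by
    intro s hs
    induction s with
    | zero =>
        obtain ⟨hb, hg, ha, hp⟩ := R.init
        exact ⟨hb, fun q => Or.inl (hp q), fun q g hq => by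
          rcases hq with hq | hq | hq <;> rw [hp q] at hq <;> cases hq⟩
    | succ s ih =>
        refine sigFreeInv_preserved R s (ih (Nat.le_of_succ_le hs)) (fun q hq => ?_)
        exact absurd (hno s q hq) (not_lt.mpr (Nat.le_of_succ_le hs))
  obtain ⟨hbit, hidle, hmem⟩ := hfree t le_rfl
  obtain ⟨hact, hin, hret⟩ := hw
  have hstep := R.step t
  rw [hact] at hstep; simp only at hstep
  generalize hc' : R.cfg (t + 1) = c' at hstep
  rw [hc'] at hret
  cases hstep with
  | invokeSignal h => rw [h] at hin; simp [InWait] at hin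
  | invokeWait h => rw [h] at hin; simp [InWait] at hin
  | sig1 h => rw [h] at hin; simp [InWait] at hin
  | sig2 h => rw [h] at hin; simp [InWait] at hin
  | sig3none h => rw [h] at hin; simp [InWait] at hin
  | sig3some a h => rw [h] at hin; simp [InWait] at hin
  | wait1 g h hg => simp [Function.update] at hret
  | wait2 g h => simp [Function.update] at hret
  | wait3 g h => simp [Function.update] at hret
  | wait4tt g h hb => rw [hbit] at hb; cases hb
  | wait4ff g h hb => simp [Function.update] at hret
  | wait5tt g h hm =>
      have := hmem p g (Or.inr (Or.inr h)); rw [this] at hm; cases hm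
  | wait5ff g h hm => rw [hret] at hin; simp [InWait] at hin
end

section
/- In the DSM implementation of the Signal object, provided no two executions of wait() are concurrent, whenever an execution of wait() returns, the object's State is present. -/
variable {Proc Addr : Type}

variable [DecidableEq Proc] [DecidableEq Addr]

-- The inductive invariant.
def SigInv (c : Config Proc Addr) : Prop :=
  (∀ p, c.pc p = PC.sig2 → c.bit = true) ∧
  (∀ p a, c.pc p = PC.sig3 a → c.bit = true) ∧
  (∀ p g, (c.pc p = PC.wait3 g ∨ c.pc p = PC.wait4 g ∨ c.pc p = PC.wait5 g) →
      c.mem g = true → c.bit = true)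

lemma sigInv_of_bit {c : Config Proc Addr} (hb : c.bit = true) : SigInv c :=
  ⟨fun _ _ => hb, fun _ _ _ => hb, fun _ _ _ _ => hb⟩

lemma sigInv_pcUpdate {c c' : Config Proc Addr} (hI : SigInv c) {p : Proc} {x : PC Addr}
    (hbit : c'.bit = c.bit) (hmem : c'.mem = c.mem)
    (hpc : c'.pc = Function.update c.pc p x)
    (hx1 : x = PC.sig2 → c.bit = true)
    (hx2 : ∀ a, x = PC.sig3 a → c.bit = true)
    (hx3 : ∀ g, (x = PC.wait3 g ∨ x = PC.wait4 g ∨ x = PC.wait5 g) →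
        c.mem g = true → c.bit = true) : SigInv c' := by
  obtain ⟨h1, h2, h3⟩ := hI
  rw [SigInv, hbit, hmem, hpc]
  refine ⟨fun q hq => ?_, fun q a hq => ?_, fun q g hq hm => ?_⟩ <;>
    rcases eq_or_ne q p with rfl | hne
  · rw [Function.update_self] at hq; exact hx1 hq
  · rw [Function.update_of_ne hne] at hq; exact h1 q hq
  · rw [Function.update_self] at hq; exact hx2 a hq
  · rw [Function.update_of_ne hne] at hq; exact h2 q a hq
  · simp only [Function.update_self] at hq; exact hx3 g hq hm
  · simp only [Function.update_of_ne hne] at hq; exact h3 q g hq hm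

lemma sigInv_step {c c' : Config Proc Addr} {p : Proc}
    (hI : SigInv c) (hs : Step c p c') : SigInv c' := by
  obtain ⟨h1, h2, h3⟩ := id hI
  cases hs with
  | invokeSignal h =>
      exact sigInv_pcUpdate hI rfl rfl rfl (by simp) (by simp) (by simp)
  | invokeWait h =>
      exact sigInv_pcUpdate hI rfl rfl rfl (by simp) (by simp) (by simp)
  | sig1 h => exact sigInv_of_bit rfl
  | sig2 h =>
      exact sigInv_pcUpdate hI rfl rfl rfl (by simp) (fun a _ => h1 p h) (by simp)
  | sig3none h =>
      exact sigInv_pcUpdate hI rfl rfl rfl (by simp) (by simp) (by simp)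
  | sig3some a h => exact sigInv_of_bit (h2 p (some a) h)
  | wait1 g h hg =>
      exact sigInv_pcUpdate hI rfl rfl rfl (by simp) (by simp) (by simp)
  | wait2 g h =>
      refine ⟨fun q hq => ?_, fun q a hq => ?_, fun q g' hq hm => ?_⟩ <;>
        dsimp only at hq ⊢ <;> simp only [Function.update_apply] at hq
      · rcases eq_or_ne q p with rfl | hne
        · simp at hq
        · rw [if_neg hne] at hq; exact h1 q hq
      · rcases eq_or_ne q p with rfl | hne
        · simp at hq
        · rw [if_neg hne] at hq; exact h2 q a hq
      · dsimp only at hm; simp only [Function.update_apply] at hm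
        rcases eq_or_ne g' g with rfl | hgg
        · simp at hm
        · rw [if_neg hgg] at hm
          rcases eq_or_ne q p with rfl | hne
          · rw [if_pos rfl] at hq
            rcases hq with hq | hq | hq <;> simp_all
          · rw [if_neg hne] at hq
            exact h3 q g' hq hm
  | wait3 g h =>
      refine sigInv_pcUpdate hI rfl rfl rfl (by simp) (by simp) ?_
      intro g' hg' hm
      rcases hg' with hg' | hg' | hg' <;> simp_all
      exact h3 p g' (Or.inl h) hm
  | wait4tt g h hb => exact sigInv_of_bit hb
  | wait4ff g h hb =>
      refine sigInv_pcUpdate hI rfl rfl rfl (by simp) (by simp) ?_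
      intro g' hg' hm
      rcases hg' with hg' | hg' | hg' <;> simp_all
      exact absurd hm (by simp [h3 p g' (Or.inr (Or.inl h))])
  | wait5tt g h hm => exact sigInv_of_bit (h3 p g (Or.inr (Or.inr h)) hm)
  | wait5ff g h hm => exact hI

lemma sigInv_run (R : Run Proc Addr) : ∀ n, SigInv (R.cfg n) := by
  intro n
  induction n with
  | zero =>
      obtain ⟨hb, hg, ha, hp⟩ := R.init
      exact ⟨fun q hq => by simp [hp q] at hq, fun q a hq => by simp [hp q] at hq,
        fun q g hq => by simp [hp q] at hq⟩
  | succ n ih =>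
      have hs := R.step n
      cases hact : R.act n with
      | none => rw [hact] at hs; simpa [hs] using ih
      | some p => rw [hact] at hs; exact sigInv_step ih hs

/-- Theorem 1(ii): in the DSM implementation of the Signal
object, provided no two executions of `wait()` are concurrent, whenever an
execution of `wait()` returns, the object's State is present (i.e. the shared
bit recording `State = present` holds at the moment of the response). -/
theorem wait_returns_only_when_present (R : Run Proc Addr)
    (hcw : NoConcurrentWaits R) :
    ∀ t p, WaitReturn R t p → (R.cfg t).bit = true := by
  intro t p ⟨hact, hin, hidle⟩
  obtain ⟨h1, h2, h3⟩ := sigInv_run R t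
  have hs := R.step t
  rw [hact] at hs
  generalize hc' : R.cfg (t + 1) = c' at hs hidle
  cases hs with
  | invokeSignal h => rw [h] at hin; exact absurd hin (by simp [InWait])
  | invokeWait h => rw [h] at hin; exact absurd hin (by simp [InWait])
  | sig1 h => rw [h] at hin; exact absurd hin (by simp [InWait])
  | sig2 h => rw [h] at hin; exact absurd hin (by simp [InWait])
  | sig3none h => rw [h] at hin; exact absurd hin (by simp [InWait])
  | sig3some a h => rw [h] at hin; exact absurd hin (by simp [InWait])
  | wait1 g h hg => simp [Function.update_self] at hidle
  | wait2 g h => simp [Function.update_self] at hidle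
  | wait3 g h => simp [Function.update_self] at hidle
  | wait4tt g h hb => exact hb
  | wait4ff g h hb => simp [Function.update_self] at hidle
  | wait5tt g h hm => exact h3 p g (Or.inr (Or.inr h)) hm
  | wait5ff g h hm => rw [hidle] at h; simp at h
end

section
/- In the DSM implementation of the Signal object, provided no two executions of wait() are concurrent, once the object's State becomes present, any execution of wait() by a process π completes in a bounded number of π's own steps. -/
variable {Proc Addr : Type}

variable [DecidableEq Proc] [DecidableEq Addr]

/-- The object's State has become present by time `t`: some execution of
`signal()` has been completed before `t` (its final step — line 3/4 of
`signal()`, the step from `sig3` back to idle — occurred at some step `s < t`). -/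
def SignalCompletedBy (R : Run Proc Addr) (t : ℕ) : Prop :=
  ∃ s, s < t ∧ ∃ (q : Proc) (a : Option Addr),
    R.act s = some q ∧ (R.cfg s).pc q = PC.sig3 a ∧ (R.cfg (s + 1)).pc q = PC.idle

/-- Rank of a pc: number of own steps until `wait()` must have returned. -/
def rankPC {Addr : Type} : PC Addr → ℕ
  | PC.wait1 => 5
  | PC.wait2 _ => 4
  | PC.wait3 _ => 3
  | PC.wait4 _ => 2
  | PC.wait5 _ => 1
  | _ => 0

/-- State invariant. -/
def StateInv (c : Config Proc Addr) : Prop :=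
  (∀ q, c.pc q = PC.sig2 → c.bit = true) ∧
  (∀ q a, c.pc q = PC.sig3 a → c.bit = true) ∧
  (∀ p g, c.pc p = PC.wait4 g → c.goAddr = some g) ∧
  (∀ p g, c.pc p = PC.wait5 g → c.goAddr = some g) ∧
  (∀ p q g a, c.pc p = PC.wait5 g → c.pc q = PC.sig3 a → a = some g)

/-- After a signal completes: bit is set and every waiting spin variable is set. -/
def MInv (c : Config Proc Addr) : Prop :=
  c.bit = true ∧ ∀ p g, c.pc p = PC.wait5 g → c.mem g = true

/-- Mutual exclusion of waits, at a single configuration. -/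
def NCWc (c : Config Proc Addr) : Prop :=
  ∀ p q, InWait (c.pc p) → InWait (c.pc q) → p = q

lemma stateInv_step {c c' : Config Proc Addr} {q : Proc}
    (hn : NCWc c) (hsi : StateInv c) (hstep : Step c q c') : StateInv c' := by
  obtain ⟨A1, A2, B1, B2, C⟩ := hsi
  cases hstep <;>
    refine ⟨fun r hr => ?_, fun r a hr => ?_, fun r g hr => ?_, fun r g hr => ?_,
      fun r s g a hr hs => ?_⟩ <;>
    (try simp only [Function.update_apply] at *) <;>
    (try split_ifs at *) <;>
    (try simp_all) <;> (try solve_by_elim) <;>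
    (try first
      | (exfalso; rename_i hq hg hne;
         exact hne (hn _ _ (by rw [hr]; trivial) (by rw [hq]; trivial)))
      | (exfalso; rename_i hq hne;
         exact hne (hn _ _ (by rw [hr]; trivial) (by rw [hq]; trivial))))


lemma mInv_step {c c' : Config Proc Addr} {q : Proc}
    (hn : NCWc c) (hsi : StateInv c) (hstep : Step c q c') (hm : MInv c) : MInv c' := by
  obtain ⟨A1, A2, B1, B2, C⟩ := hsi
  obtain ⟨Mb, Mw⟩ := hm
  cases hstep <;>
    refine ⟨?_, fun r g hr => ?_⟩ <;>
    (try simp only [Function.update_apply] at *) <;>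
    (try split_ifs at *) <;>
    (try simp_all) <;> (try solve_by_elim) <;>
    (try first
      | (exfalso; rename_i hq hg hne;
         exact hne (hn _ _ (by rw [hr]; trivial) (by rw [hq]; trivial)))
      | (exfalso; rename_i hq hne;
         exact hne (hn _ _ (by rw [hr]; trivial) (by rw [hq]; trivial))))


lemma mInv_start {c c' : Config Proc Addr} {q : Proc} {a : Option Addr}
    (hsi : StateInv c) (hstep : Step c q c') (hq : c.pc q = PC.sig3 a) : MInv c' := by
  obtain ⟨A1, A2, B1, B2, C⟩ := hsi
  have hbit := A2 q a hq
  cases hstep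
  case sig3none h =>
    refine ⟨hbit, fun r g hr => ?_⟩
    have hrq : ¬ r = q := by
      intro e; subst e; simp [Function.update_apply] at hr
    simp only [Function.update_apply, if_neg hrq] at hr
    have := C r q g none hr h
    simp at this
  case sig3some a0 h =>
    refine ⟨hbit, fun r g hr => ?_⟩
    have hrq : ¬ r = q := by
      intro e; subst e; simp [Function.update_apply] at hr
    simp only [Function.update_apply, if_neg hrq] at hr
    have hg := C r q g (some a0) hr h
    simp only [Option.some_inj] at hg
    simp [Function.update_apply, hg]
  all_goals exfalso; simp_all

lemma stateInv_init {c : Config Proc Addr} (h : Init c) : StateInv c := by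
  obtain ⟨hb, hg, ha, hp⟩ := h
  refine ⟨?_, ?_, ?_, ?_, ?_⟩ <;> intros <;> simp_all

lemma pc_stable {R : Run Proc Addr} {n : ℕ} {p : Proc} (h : R.act n ≠ some p) :
    (R.cfg (n + 1)).pc p = (R.cfg n).pc p := by
  have hs := R.step n
  cases hact : R.act n with
  | none => rw [hact] at hs; rw [hs]
  | some q =>
    rw [hact] at hs
    have hpq : q ≠ p := fun e => h (by rw [hact, e])
    revert hs
    generalize R.cfg (n + 1) = c'
    intro hs
    cases hs <;> simp [Function.update_apply, Ne.symm hpq]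

lemma stateInv_all (R : Run Proc Addr) (hN : NoConcurrentWaits R) :
    ∀ n, StateInv (R.cfg n) := by
  intro n
  induction n with
  | zero => exact stateInv_init R.init
  | succ n ih =>
    have hs := R.step n
    cases hact : R.act n with
    | none => rw [hact] at hs; rw [hs]; exact ih
    | some q => rw [hact] at hs; exact stateInv_step (fun a b => hN n a b) ih hs

lemma mInv_of (R : Run Proc Addr) (hN : NoConcurrentWaits R) (n : ℕ)
    (hH : SignalCompletedBy R n) : MInv (R.cfg n) := by
  obtain ⟨s, hsn, q, a, hact, hpc, _⟩ := hH
  have key : ∀ d, MInv (R.cfg (s + 1 + d)) := by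
    intro d
    induction d with
    | zero =>
      have hs := R.step s
      rw [hact] at hs
      exact mInv_start (stateInv_all R hN s) hs hpc
    | succ d ih =>
      have hs := R.step (s + 1 + d)
      cases hact2 : R.act (s + 1 + d) with
      | none =>
        rw [hact2] at hs
        show MInv (R.cfg (s + 1 + d + 1))
        rw [hs]; exact ih
      | some q2 =>
        rw [hact2] at hs
        exact mInv_step (fun a b => hN _ a b) (stateInv_all R hN _) hs ih
  have he : s + 1 + (n - (s + 1)) = n := by omega
  rw [← he]; exact key _

lemma exit_step {c c' : Config Proc Addr} {p : Proc} (hm : MInv c)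
    (hstep : Step c p c') (hw : InWait (c.pc p)) :
    c'.pc p = PC.idle ∨
      (InWait (c'.pc p) ∧ rankPC (c'.pc p) + 1 = rankPC (c.pc p)) := by
  obtain ⟨Mb, Mw⟩ := hm
  cases hstep
  case wait5ff g hpc hmem => rw [Mw _ _ hpc] at hmem; simp at hmem
  all_goals simp_all [Function.update_apply, InWait, rankPC]

lemma signalCompleted_mono {R : Run Proc Addr} {n m : ℕ} (h : n ≤ m)
    (hH : SignalCompletedBy R n) : SignalCompletedBy R m := by
  obtain ⟨s, hs, rest⟩ := hH
  exact ⟨s, by omega, rest⟩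

lemma loop (R : Run Proc Addr) (hN : NoConcurrentWaits R) (p : Proc) (m t₀ : ℕ)
    (hH : SignalCompletedBy R t₀) :
    ∀ k n, t₀ ≤ n → InWait ((R.cfg n).pc p) → rankPC ((R.cfg n).pc p) ≤ k →
      k ≤ ((Finset.Ico n m).filter (fun j => R.act j = some p)).card →
      ∃ r, n ≤ r ∧ r < m ∧ (R.cfg (r + 1)).pc p = PC.idle := by
  intro k
  induction k with
  | zero =>
    intro n _ hw hrk _
    exfalso
    cases hpc : (R.cfg n).pc p <;> simp_all [InWait, rankPC]
  | succ k ih =>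
    intro n hn hw hrk hcard
    set S := (Finset.Ico n m).filter (fun j => R.act j = some p) with hS
    have hne : S.Nonempty := Finset.card_pos.mp (by omega)
    set j := S.min' hne with hj
    have hjS : j ∈ S := S.min'_mem hne
    have hjmem := hjS
    rw [hS, Finset.mem_filter, Finset.mem_Ico] at hjmem
    obtain ⟨⟨hnj, hjm⟩, hact⟩ := hjmem
    have hmin : ∀ i ∈ S, j ≤ i := fun i hi => S.min'_le i hi
    have hconst : ∀ i, n ≤ i → i ≤ j → (R.cfg i).pc p = (R.cfg n).pc p := by
      intro i hni hij
      induction i with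
      | zero => have h0 : n = 0 := Nat.le_zero.mp hni; rw [h0]
      | succ i ihh =>
        rcases Nat.lt_or_ge n (i + 1) with h1 | h2
        · have hni' : n ≤ i := by omega
          have hiltj : i < j := by omega
          have hnotp : R.act i ≠ some p := by
            intro he
            have : i ∈ S := by
              rw [hS, Finset.mem_filter, Finset.mem_Ico]
              exact ⟨⟨hni', by omega⟩, he⟩
            exact absurd (hmin i this) (by omega)
          rw [pc_stable hnotp, ihh hni' (by omega)]
        · have h3 : n = i + 1 := by omega
          rw [h3]
    have hpcj : (R.cfg j).pc p = (R.cfg n).pc p := hconst j hnj le_rfl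
    have hs := R.step j
    rw [hact] at hs
    have hMj : MInv (R.cfg j) :=
      mInv_of R hN j (signalCompleted_mono (by omega) hH)
    have hwj : InWait ((R.cfg j).pc p) := by rw [hpcj]; exact hw
    rcases exit_step hMj hs hwj with hidle | ⟨hw', hrk'⟩
    · exact ⟨j, by omega, hjm, hidle⟩
    · have hsplit : (Finset.Ico n m) = (Finset.Ico n (j + 1)) ∪ (Finset.Ico (j + 1) m) :=
        (Finset.Ico_union_Ico_eq_Ico (by omega) (by omega)).symm
      have hdisj : Disjoint (Finset.Ico n (j + 1)) (Finset.Ico (j + 1) m) := by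
        simp [Finset.disjoint_left, Finset.mem_Ico]
        intro x h1 h2 h3
        omega
      have hsub : (Finset.Ico n (j + 1)).filter (fun i => R.act i = some p) ⊆ {j} := by
        intro i hi
        rw [Finset.mem_filter, Finset.mem_Ico] at hi
        have : i ∈ S := by
          rw [hS, Finset.mem_filter, Finset.mem_Ico]
          exact ⟨⟨hi.1.1, by omega⟩, hi.2⟩
        have := hmin i this
        simp only [Finset.mem_singleton]
        omega
      have hcard1 : ((Finset.Ico n (j + 1)).filter (fun i => R.act i = some p)).card ≤ 1 := by
        calc _ ≤ ({j} : Finset ℕ).card := Finset.card_le_card hsub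
        _ = 1 := Finset.card_singleton j
      have hcards : S.card =
          ((Finset.Ico n (j + 1)).filter (fun i => R.act i = some p)).card +
          ((Finset.Ico (j + 1) m).filter (fun i => R.act i = some p)).card := by
        rw [hS, hsplit, Finset.filter_union]
        exact Finset.card_union_of_disjoint (Finset.disjoint_filter_filter hdisj)
      have hcard' : k ≤ ((Finset.Ico (j + 1) m).filter (fun i => R.act i = some p)).card := by
        omega
      have hrk2 : rankPC ((R.cfg (j + 1)).pc p) ≤ k := by
        rw [hpcj] at hrk'
        omega
      obtain ⟨r, hr1, hr2, hr3⟩ := ih (j + 1) (by omega) hw' hrk2 hcard'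
      exact ⟨r, by omega, hr2, hr3⟩

/-- Theorem 1(iv): in the DSM implementation of the Signal
object, provided no two executions of `wait()` are concurrent, once the
object's State has become present, any execution of `wait()` by a process `π`
completes in a bounded number of `π`'s own steps: there is a bound `b` such
that if the State is present by time `t₀` and `π` is executing `wait()` at
time `t₀`, then after at most `b` further steps of `π` the execution of
`wait()` has returned. -/
theorem wait_bounded_once_present :
    ∃ b : ℕ, ∀ R : Run Proc Addr, NoConcurrentWaits R →
      ∀ (t₀ : ℕ) (p : Proc), SignalCompletedBy R t₀ →
        InWait ((R.cfg t₀).pc p) →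
        ∀ m : ℕ,
          b ≤ ((Finset.Ico t₀ m).filter (fun j => R.act j = some p)).card →
          ∃ r, t₀ ≤ r ∧ r < m ∧ (R.cfg (r + 1)).pc p = PC.idle := by
  refine ⟨5, fun R hN t₀ p hH hw m hcard => ?_⟩
  have hrk : rankPC ((R.cfg t₀).pc p) ≤ 5 := by
    cases hpc : (R.cfg t₀).pc p <;> simp [rankPC]
  exact loop R hN p m t₀ hH 5 t₀ le_rfl hw hrk hcard
end

section
/- In the DSM implementation of the Signal object, provided no two executions of wait() are concurrent, every execution of signal() and every execution of wait() incurs only O(1) remote memory references on a DSM machine: in particular, the busy-waiting in wait() is performed on a freshly allocated boolean variable residing in the waiting process's own memory partition. -/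
variable {Proc Addr : Type}

variable [DecidableEq Proc] [DecidableEq Addr]

/-- The allocation in `wait()` (line 1) creates the fresh spin variable in the
allocating process's own memory partition, as the implementation prescribes. -/
def AllocInOwnPartition (R : Run Proc Addr) (owner : Addr → Proc) : Prop :=
  ∀ n p g, R.act n = some p → (R.cfg n).pc p = PC.wait1 →
    (R.cfg (n + 1)).pc p = PC.wait2 g → owner g = p

/-- Whether the step taken by process `p` from program counter `pc` counts as
a remote memory reference on a DSM machine with partition map `owner`:
accesses to the shared variables `Bit` (lines sig1, wait4) and `GoAddr`
(lines sig2, wait3) are (conservatively) counted as remote; accesses to a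
boolean spin variable at address `a` (lines sig3(some a), wait2, wait5) are
remote exactly when `a` does not reside in `p`'s partition; the purely local
steps (invocation, the NIL test of sig3, allocation of a fresh variable in
one's own partition) are not RMRs. -/
def rmrStep [DecidableEq Proc] (owner : Addr → Proc) (p : Proc) :
    PC Addr → Bool
  | PC.idle => false
  | PC.sig1 => true
  | PC.sig2 => true
  | PC.sig3 none => false
  | PC.sig3 (some a) => decide (owner a ≠ p)
  | PC.wait1 => false
  | PC.wait2 g => decide (owner g ≠ p)
  | PC.wait3 _ => true
  | PC.wait4 _ => true
  | PC.wait5 g => decide (owner g ≠ p)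

/-- The steps `n, …, m` all lie inside a single operation execution
(`signal()` or `wait()`) by process `p`, which is invoked at step `n`. -/
def OpWithin (R : Run Proc Addr) (p : Proc) (n m : ℕ) : Prop :=
  R.act n = some p ∧ (R.cfg n).pc p = PC.idle ∧
    (R.cfg (n + 1)).pc p ≠ PC.idle ∧
    ∀ j, n < j → j ≤ m → (R.cfg j).pc p ≠ PC.idle


section AuxRMR

def pcRank {Addr : Type} : PC Addr → ℕ
  | .idle => 0
  | .sig1 => 1
  | .sig2 => 2
  | .sig3 _ => 3
  | .wait1 => 1
  | .wait2 _ => 2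
  | .wait3 _ => 3
  | .wait4 _ => 4
  | .wait5 _ => 5

lemma step_frame {c c' : Config Proc Addr} {q p : Proc} (h : Step c q c')
    (hpq : p ≠ q) : c'.pc p = c.pc p := by
  cases h <;> simp_all [Function.update_of_ne hpq]

lemma run_step_some (R : Run Proc Addr) {n : ℕ} {q : Proc}
    (hact : R.act n = some q) : Step (R.cfg n) q (R.cfg (n + 1)) := by
  have hs := R.step n
  rw [hact] at hs
  exact hs

/-- Ownership invariant: while `p` is past line 1 of `wait()` with spin
variable `g`, that variable lies in `p`'s own partition. -/
lemma owner_inv (R : Run Proc Addr) (owner : Addr → Proc)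
    (hA : AllocInOwnPartition R owner) :
    ∀ n p g, ((R.cfg n).pc p = PC.wait2 g ∨ (R.cfg n).pc p = PC.wait3 g ∨
        (R.cfg n).pc p = PC.wait4 g ∨ (R.cfg n).pc p = PC.wait5 g) →
      owner g = p := by
  intro n
  induction n with
  | zero =>
    intro p g hpg
    have := R.init.2.2.2 p
    simp_all
  | succ n ih =>
    intro p g hpg
    cases hact : R.act n with
    | none =>
      have hs := R.step n
      rw [hact] at hs; simp only [] at hs
      exact ih p g (by rwa [← hs])
    | some q =>
      have hs := run_step_some R hact
      by_cases hpq : p = q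
      · subst hpq
        obtain ⟨c2, hc2⟩ : ∃ c2, R.cfg (n + 1) = c2 := ⟨_, rfl⟩
        rw [hc2] at hs hpg
        cases hs with
        | invokeSignal h => simp_all
        | invokeWait h => simp_all
        | sig1 h => simp_all
        | sig2 h => simp_all
        | sig3none h => simp_all
        | sig3some a h => simp_all
        | wait1 g' h hg =>
          have h2 : (R.cfg (n+1)).pc p = PC.wait2 g' := by rw [hc2]; simp
          have hgg : g = g' := by simp_all
          subst hgg
          exact hA n p g hact h h2
        | wait2 g' h =>
          have hgg : g = g' := by simp_all
          subst hgg
          exact ih p g (Or.inl h)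
        | wait3 g' h =>
          have hgg : g = g' := by simp_all
          subst hgg
          exact ih p g (Or.inr (Or.inl h))
        | wait4tt g' h hb => simp_all
        | wait4ff g' h hb =>
          have hgg : g = g' := by simp_all
          subst hgg
          exact ih p g (Or.inr (Or.inr (Or.inl h)))
        | wait5tt g' h hm => simp_all
        | wait5ff g' h hm =>
          have hgg : g = g' := by simp_all
          subst hgg
          exact ih p g (Or.inr (Or.inr (Or.inr h)))
      · have := step_frame hs hpq
        exact ih p g (by rwa [← this])

/-- Within an operation execution, the rank of `p`'s program counter never
decreases. -/
lemma rank_step_mono (R : Run Proc Addr) {p : Proc} {n m : ℕ}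
    (hop : OpWithin R p n m) :
    ∀ l, n < l → l + 1 ≤ m →
      pcRank ((R.cfg l).pc p) ≤ pcRank ((R.cfg (l + 1)).pc p) := by
  intro l hnl hlm
  have hne : (R.cfg l).pc p ≠ PC.idle := hop.2.2.2 l hnl (Nat.le_of_succ_le hlm)
  have hne' : (R.cfg (l + 1)).pc p ≠ PC.idle :=
    hop.2.2.2 (l + 1) (Nat.lt_succ_of_lt hnl) hlm
  cases hact : R.act l with
  | none =>
    have hs := R.step l
    rw [hact] at hs; simp only [] at hs; rw [hs]
  | some q =>
    have hs := run_step_some R hact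
    by_cases hpq : p = q
    · subst hpq
      obtain ⟨c2, hc2⟩ : ∃ c2, R.cfg (l + 1) = c2 := ⟨_, rfl⟩
      rw [hc2] at hs hne' ⊢
      cases hs with
      | invokeSignal h => simp_all
      | invokeWait h => simp_all
      | sig1 h => simp_all [pcRank]
      | sig2 h => simp_all [pcRank]
      | sig3none h => simp_all
      | sig3some a h => simp_all
      | wait1 g' h hg => simp_all [pcRank]
      | wait2 g' h => simp_all [pcRank]
      | wait3 g' h => simp_all [pcRank]
      | wait4tt g' h hb => simp_all
      | wait4ff g' h hb => simp_all [pcRank]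
      | wait5tt g' h hm => simp_all
      | wait5ff g' h hm => exact le_rfl
    · rw [step_frame hs hpq]

lemma rank_mono (R : Run Proc Addr) {p : Proc} {n m : ℕ}
    (hop : OpWithin R p n m) :
    ∀ a b, n < a → a ≤ b → b ≤ m →
      pcRank ((R.cfg a).pc p) ≤ pcRank ((R.cfg b).pc p) := by
  intro a b hna hab hbm
  induction b, hab using Nat.le_induction with
  | base => exact le_rfl
  | succ b hab ih =>
    exact le_trans (ih (Nat.le_of_succ_le hbm)) (rank_step_mono R hop b
      (lt_of_lt_of_le hna hab) hbm)

/-- At an RMR step inside the operation that does not finish it, the rank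
strictly increases. -/
lemma rank_strict (R : Run Proc Addr) (owner : Addr → Proc)
    (hA : AllocInOwnPartition R owner) {p : Proc} {n m j : ℕ}
    (hop : OpWithin R p n m) (hnj : n ≤ j) (hjm : j < m)
    (hact : R.act j = some p)
    (hrmr : rmrStep owner p ((R.cfg j).pc p) = true) :
    pcRank ((R.cfg j).pc p) < pcRank ((R.cfg (j + 1)).pc p) := by
  have hne' : (R.cfg (j + 1)).pc p ≠ PC.idle :=
    hop.2.2.2 (j + 1) (Nat.lt_succ_of_le hnj) hjm
  have hs := run_step_some R hact
  obtain ⟨c2, hc2⟩ : ∃ c2, R.cfg (j + 1) = c2 := ⟨_, rfl⟩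
  rw [hc2] at hs hne' ⊢
  cases hs with
  | invokeSignal h => rw [h] at hrmr; simp [rmrStep] at hrmr
  | invokeWait h => rw [h] at hrmr; simp [rmrStep] at hrmr
  | sig1 h => simp_all [pcRank]
  | sig2 h => simp_all [pcRank]
  | sig3none h => rw [h] at hrmr; simp [rmrStep] at hrmr
  | sig3some a h => simp_all
  | wait1 g' h hg => rw [h] at hrmr; simp [rmrStep] at hrmr
  | wait2 g' h => simp_all [pcRank]
  | wait3 g' h => simp_all [pcRank]
  | wait4tt g' h hb => simp_all
  | wait4ff g' h hb => simp_all [pcRank]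
  | wait5tt g' h hm => simp_all
  | wait5ff g' h hm =>
    have := owner_inv R owner hA j p g' (Or.inr (Or.inr (Or.inr h)))
    rw [h] at hrmr
    simp [rmrStep, this] at hrmr

lemma rank_range (R : Run Proc Addr) (owner : Addr → Proc)
    (hA : AllocInOwnPartition R owner) {p : Proc} {j : ℕ}
    (hrmr : rmrStep owner p ((R.cfg j).pc p) = true) :
    pcRank ((R.cfg j).pc p) ∈ Finset.Icc 1 4 := by
  rcases hx : (R.cfg j).pc p with _ | _ | _ | a | _ | g | g | g | g
  all_goals rw [hx] at hrmr
  · simp [rmrStep] at hrmr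
  · simp [pcRank]
  · simp [pcRank]
  · cases a with
    | none => simp [rmrStep] at hrmr
    | some a => simp [pcRank]
  · simp [rmrStep] at hrmr
  · simp [pcRank]
  · simp [pcRank]
  · simp [pcRank]
  · have := owner_inv R owner hA j p g (Or.inr (Or.inr (Or.inr hx)))
    simp [rmrStep, this] at hrmr

end AuxRMR

/-- Theorem 1(v): in the DSM implementation of the Signal
object, provided no two executions of `wait()` are concurrent (and the fresh
spin variable of each `wait()` is hosted in the waiting process's own memory
partition, as the code prescribes), every execution of `signal()` and every
execution of `wait()` incurs only O(1) remote memory references on a DSM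
machine; in particular, the busy-waiting in `wait()` is performed on a freshly
allocated boolean variable residing in the waiting process's own memory
partition (hence spinning incurs no RMRs). -/
theorem signal_wait_constant_RMR :
    ∃ b : ℕ, ∀ (R : Run Proc Addr) (owner : Addr → Proc),
      NoConcurrentWaits R → AllocInOwnPartition R owner →
      (∀ (n : ℕ) (p : Proc) (g : Addr),
          (R.cfg n).pc p = PC.wait5 g → owner g = p) ∧
      (∀ (p : Proc) (n m : ℕ), OpWithin R p n m →
        (((Finset.Icc n m).filter (fun j =>
            R.act j = some p ∧
              rmrStep owner p ((R.cfg j).pc p) = true)).card) ≤ b) := by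
  refine ⟨4, fun R owner _ hA => ?_⟩
  refine ⟨fun n p g h => owner_inv R owner hA n p g (Or.inr (Or.inr (Or.inr h))), ?_⟩
  intro p n m hop
  have hcard : (Finset.Icc (1:ℕ) 4).card = 4 := by simp
  rw [← hcard]
  apply Finset.card_le_card_of_injOn (fun j => pcRank ((R.cfg j).pc p))
  · intro j hj
    simp only [Finset.mem_coe, Finset.mem_filter] at hj
    exact rank_range R owner hA hj.2.2
  · intro j hj k hk hfk
    simp only [Finset.coe_filter, Set.mem_setOf_eq, Finset.mem_Icc] at hj hk
    simp only [] at hfk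
    by_contra hne
    rcases lt_or_gt_of_ne hne with hlt | hlt
    · have hjm : j < m := lt_of_lt_of_le hlt hk.1.2
      have h1 := rank_strict R owner hA hop hj.1.1 hjm hj.2.1 hj.2.2
      have h2 := rank_mono R hop (j + 1) k (Nat.lt_succ_of_le hj.1.1)
        hlt hk.1.2
      omega
    · have hkm : k < m := lt_of_lt_of_le hlt hj.1.2
      have h1 := rank_strict R owner hA hop hk.1.1 hkm hk.2.1 hk.2.2
      have h2 := rank_mono R hop (k + 1) j (Nat.lt_succ_of_le hk.1.1)
        hlt hj.1.2
      omega
end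

section
/- (Mutual Exclusion) In every configuration of every run of the k-ported recoverable mutual exclusion algorithm, at most one process is in the Critical Section; equivalently, at most one process π has hidden program counter pĉ(π) = (the first line of Exit). This follows from the invariant: if two processes were both in the CS they would both belong to the set Q of queued processes, but the invariant's ordering condition on Q forces every queued process other than the first in the order to have pĉ in {line 6, line 16}, a contradiction. -/
/-!
**Statement 7** (Mutual Exclusion, Lemma 1): in every configuration of every
run of the k-ported recoverable mutual exclusion algorithm, at most one
process is in the Critical Section, i.e. at most one process `π` has hidden
program counter `pĉ(π)` equal to the first line of the Exit section.

This follows from the algorithm's invariant: every process whose hidden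
program counter is the CS line belongs to the set `Q` of queued processes
(by the definition of `Q`), and the invariant's ordering condition
(Condition 17) provides, in every configuration, an enumeration
`π₁, …, π_l` of `Q` in which every process other than the first has hidden
program counter in `{line 6, line 16}` — and the CS line is neither line 6
nor line 16, a contradiction if two processes were in the CS.

We formalize exactly this consequence of the invariant: for any run
(a sequence of configurations), if in every configuration every process in
the CS belongs to `Q` and `Q` admits such an ordering, then at most one
process is in the CS in every configuration.
-/

theorem mutual_exclusion_from_invariant
    {Proc Line Config : Type}
    (line6 line16 csLine : Line)
    (h6 : csLine ≠ line6) (h16 : csLine ≠ line16)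
    -- hidden program counter of each process in each configuration
    (pch : Config → Proc → Line)
    -- the set of queued processes in each configuration
    (Q : Config → Set Proc)
    -- the configurations of an arbitrary run of the algorithm
    (run : ℕ → Config)
    -- by definition of Q, a process in the CS is a queued process
    (hQ : ∀ n p, pch (run n) p = csLine → p ∈ Q (run n))
    -- invariant Condition 17: whenever Q is nonempty there is an ordering
    -- π₁, …, π_l of the (distinct) processes of Q such that every process
    -- other than π₁ has hidden program counter line 6 or line 16
    (horder : ∀ n, (Q (run n)).Nonempty →
      ∃ L : List Proc, L.Nodup ∧ (∀ p, p ∈ Q (run n) ↔ p ∈ L) ∧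
        ∀ p ∈ L.tail, pch (run n) p = line6 ∨ pch (run n) p = line16) :
    -- Mutual Exclusion: at most one process is in the CS at any point
    ∀ n p q, pch (run n) p = csLine → pch (run n) q = csLine → p = q := by
  intro n p q hp hq
  have hpQ := hQ n p hp
  have hqQ := hQ n q hq
  obtain ⟨L, hnd, hmem, htail⟩ := horder n ⟨p, hpQ⟩
  have hpL := (hmem p).mp hpQ
  have hqL := (hmem q).mp hqQ
  cases L with
  | nil => simp at hpL
  | cons a t =>
    have hp' : p = a := by
      rcases List.mem_cons.mp hpL with h | h
      · exact h
      · rcases htail p h with h' | h' <;> simp_all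
    have hq' : q = a := by
      rcases List.mem_cons.mp hqL with h | h
      · exact h
      · rcases htail q h with h' | h' <;> simp_all
    rw [hp', hq']
end
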